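/- arXiv:1405.2560 — 6 statements merged into one kernel-verified Lean document; each statement's English description precedes it below -/
import Mathlib

section
/- For any permutation π of length n, the word f(π) = d_π(1) d_π(2) ... d_π(n), where d_π(c) is one plus the number of descents preceding the letter c in π, satisfies: every letter in {1,...,max(f(π))} occurs in f(π), and the rightmost occurrence of each letter i ∈ {1,...,max(f(π))−1} is preceded by an occurrence of i+1. -/
/-- Two lists of naturals are order-isomorphic: same length and same relative order. -/
def OrdIso (a b : List ℕ) : Prop :=
  a.length = b.length ∧
    ∀ i, i < a.length → ∀ j, j < a.length →
      (a.getD i 0 < a.getD j 0 ↔ b.getD i 0 < b.getD j 0)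

instance (a b : List ℕ) : Decidable (OrdIso a b) := by unfold OrdIso; infer_instance

/-- `σ` occurs as a pattern in `π`: some subsequence of `π` is order-isomorphic to `σ`. -/
def occursIn (σ π : List ℕ) : Prop := ∃ s ∈ π.sublists, OrdIso σ s

instance (σ π : List ℕ) : Decidable (occursIn σ π) := by unfold occursIn; infer_instance

/-- `l` is a permutation of `1, …, l.length`. -/
def IsPermList (l : List ℕ) : Prop := l.Perm ((List.range l.length).map (· + 1))

/-- The number of descents of `l` (positions `i` with `l i > l (i+1)`, 0-based). -/
def des (l : List ℕ) : ℕ :=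
  ((List.range (l.length - 1)).filter (fun i => decide (l.getD (i+1) 0 < l.getD i 0))).length

/-- `d_π(c)`: one plus the number of descents of `π` preceding the letter `c`. -/
def dval (l : List ℕ) (c : ℕ) : ℕ :=
  1 + ((List.range (l.idxOf c)).filter (fun i => decide (l.getD (i+1) 0 < l.getD i 0))).length

/-- The word `f(π) = d_π(1) d_π(2) ⋯ d_π(n)`. -/
def fword (l : List ℕ) : List ℕ := (List.range l.length).map (fun i => dval l (i+1))

/-- The largest letter of the word `w`. -/
def maxLetter (w : List ℕ) : ℕ := w.foldr max 0

/-- `p_w(j)`: positions (1-based, increasing) of the letter `j` in `w`. -/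
def posList (w : List ℕ) (j : ℕ) : List ℕ :=
  ((List.range w.length).filter (fun i => decide (w.getD i 0 = j))).map (· + 1)

/-- `g(w)`: the concatenation of the position lists `p_w(1), …, p_w(max w)`. -/
def gperm (w : List ℕ) : List ℕ := (List.range (maxLetter w)).flatMap (fun j => posList w (j+1))

/-- Membership in the poset 𝒜̂: positive letters, every letter in `{1,…,max w}` occurs,
and the rightmost occurrence of each `i < max w` is preceded by an occurrence of `i+1`. -/
def InAhat (w : List ℕ) : Prop :=
  (∀ x ∈ w, 1 ≤ x) ∧
  (∀ i, i < maxLetter w → i + 1 ∈ w) ∧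
  (∀ i, i < maxLetter w - 1 → ∃ t, t < w.length ∧ w.getD t 0 = i + 1 ∧
     (∀ s, s < w.length → t < s → w.getD s 0 ≠ i + 1) ∧ ∃ u, u < t ∧ w.getD u 0 = i + 2)

instance (w : List ℕ) : Decidable (InAhat w) := by unfold InAhat; infer_instance

/-- All permutations (as lists on `1..k`) of every length `k ≤ n`. -/
def permsUpTo (n : ℕ) : List (List ℕ) :=
  (List.range (n+1)).flatMap (fun k => ((List.range k).map (· + 1)).permutations)

/-- The interval `[a,b]` in the pattern containment poset, as a list. -/
def intervalList (a b : List ℕ) : List (List ℕ) :=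
  (permsUpTo b.length).filter (fun z => decide (occursIn a z ∧ occursIn z b))

/-- `μ` is the Möbius function of the poset of permutations under pattern containment:
`μ(a,a) = 1` and, for `a < b`, `∑_{a ≤ z ≤ b} μ(a,z) = 0`. -/
def MoebiusOn (μ : List ℕ → List ℕ → ℤ) : Prop :=
  (∀ a, μ a a = 1) ∧
  ∀ a b, IsPermList a → IsPermList b → occursIn a b → a ≠ b →
    ((intervalList a b).map (μ a)).sum = 0

/-- All lists of length `n` with entries in `{0, …, k-1}`. -/
def listsOf (n k : ℕ) : List (List ℕ) :=
  (List.range n).foldr (fun _ acc => (List.range k).flatMap (fun a => acc.map (a :: ·))) [[]]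

/-- The letters of `π` in the nonzero positions of `η`. -/
def embOcc (η π : List ℕ) : List ℕ :=
  ((List.range π.length).filter (fun i => decide (η.getD i 0 ≠ 0))).map (fun i => π.getD i 0)

/-- `η` is an embedding of `σ` in `π`: a sequence of length `|π|` whose nonzero positions
are the positions of an occurrence of `σ` in `π` and whose nonzero letters spell `σ`. -/
def IsEmbedding (η σ π : List ℕ) : Prop :=
  η.length = π.length ∧ η.filter (fun x => decide (x ≠ 0)) = σ ∧ OrdIso σ (embOcc η π)

/-- `η` is a normal embedding: nonzero at every letter of `π` lying in the tail of an
adjacency (i.e. every position whose predecessor holds the previous value). -/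
def IsNormalEmbedding (η σ π : List ℕ) : Prop :=
  IsEmbedding η σ π ∧
    ∀ i, i < π.length → 0 < i → π.getD i 0 = π.getD (i-1) 0 + 1 → η.getD i 0 ≠ 0

instance (η σ π : List ℕ) : Decidable (IsNormalEmbedding η σ π) := by
  unfold IsNormalEmbedding IsEmbedding; infer_instance

/-- The number of normal embeddings of `σ` in `π`. -/
def normalCount (σ π : List ℕ) : ℕ :=
  ((listsOf π.length (σ.length + 1)).filter (fun η => decide (IsNormalEmbedding η σ π))).length

/-- The total number of letters in all tails of all adjacencies of `π`;
equivalently, the number of adjacency pairs of `π`. -/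
def tailCount (π : List ℕ) : ℕ :=
  ((List.range π.length).filter (fun i => decide (0 < i ∧ π.getD i 0 = π.getD (i-1) 0 + 1))).length

/-- The number of occurrences of `σ` as a pattern in `π`. -/
def occCount (σ π : List ℕ) : ℕ :=
  ((List.range π.length).sublists.filter
    (fun s => decide (OrdIso σ (s.map (fun i => π.getD i 0))))).length

/-- All words of length `n` on the alphabet `{1, …, k}`. -/
def wordsOf (n k : ℕ) : List (List ℕ) := (listsOf n k).map (List.map (· + 1))

/-- All permutations of `1, …, n`, as lists. -/
def permsOfLen (n : ℕ) : List (List ℕ) := ((List.range n).map (· + 1)).permutations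

/-- Number of descents of `π` before position `p`. -/
def Dfun (π : List ℕ) (p : ℕ) : ℕ :=
  ((List.range p).filter (fun i => decide (π.getD (i+1) 0 < π.getD i 0))).length

lemma dval_eq_Dfun (π : List ℕ) (c : ℕ) : dval π c = 1 + Dfun π (π.idxOf c) := rfl

lemma Dfun_zero (π : List ℕ) : Dfun π 0 = 0 := by simp [Dfun]

lemma Dfun_succ (π : List ℕ) (p : ℕ) :
    Dfun π (p+1) = Dfun π p + (if π.getD (p+1) 0 < π.getD p 0 then 1 else 0) := by
  simp only [Dfun, List.range_succ, List.filter_append, List.length_append,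
    List.filter_cons, List.filter_nil]
  split <;> simp_all

lemma Dfun_mono (π : List ℕ) {p q : ℕ} (h : p ≤ q) : Dfun π p ≤ Dfun π q := by
  induction q with
  | zero => simp_all
  | succ q ih =>
    rcases Nat.lt_or_ge p (q+1) with h' | h'
    · have := ih (Nat.lt_succ_iff.mp h')
      have h2 := Dfun_succ π q
      omega
    · have : p = q + 1 := le_antisymm h h'
      subst this; exact le_refl _

lemma Dfun_surj (π : List ℕ) (m k : ℕ) (hk : k ≤ Dfun π m) : ∃ p ≤ m, Dfun π p = k := by
  induction m with
  | zero => exact ⟨0, le_refl 0, by have := Dfun_zero π; omega⟩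
  | succ m ih =>
    rcases Nat.lt_or_ge (Dfun π m) k with h | h
    · refine ⟨m+1, le_refl _, ?_⟩
      have h2 := Dfun_succ π m
      split_ifs at h2 <;> omega
    · obtain ⟨p, hp, hpe⟩ := ih h
      exact ⟨p, hp.trans (Nat.le_succ m), hpe⟩

lemma le_maxLetter {w : List ℕ} {x : ℕ} (h : x ∈ w) : x ≤ maxLetter w := by
  induction w with
  | nil => simp at h
  | cons a l ih =>
    simp only [List.mem_cons] at h
    simp only [maxLetter, List.foldr_cons]
    rcases h with rfl | h
    · exact le_max_left _ _
    · exact le_trans (ih h) (le_max_right _ _)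

lemma maxLetter_le {w : List ℕ} {B : ℕ} (h : ∀ x ∈ w, x ≤ B) : maxLetter w ≤ B := by
  induction w with
  | nil => simp [maxLetter]
  | cons a l ih =>
    simp only [maxLetter, List.foldr_cons]
    exact max_le (h a (by simp)) (ih fun x hx => h x (List.mem_cons_of_mem _ hx))

lemma fword_length (π : List ℕ) : (fword π).length = π.length := by simp [fword]

lemma fword_getD (π : List ℕ) {t : ℕ} (ht : t < π.length) :
    (fword π).getD t 0 = dval π (t+1) := by
  rw [List.getD_eq_getElem _ _ (by simpa [fword] using ht)]
  simp [fword]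

/-- for any permutation `π`, the word `f(π)` lies in 𝒜̂. -/
theorem fword_mem_Ahat (π : List ℕ) (hπ : IsPermList π) : InAhat (fword π) := by
  set n := π.length with hn
  have hnd : π.Nodup := by
    refine hπ.nodup_iff.mpr ?_
    exact (List.nodup_range (n := n)).map (fun a b h => by omega)
  have hmem : ∀ v, v ∈ π ↔ 1 ≤ v ∧ v ≤ n := by
    intro v
    rw [hπ.mem_iff]
    simp only [List.mem_map, List.mem_range]
    constructor
    · rintro ⟨a, ha, rfl⟩; omega
    · intro h; exact ⟨v - 1, by omega, by omega⟩
  have hgetmem : ∀ p, p < n → π.getD p 0 ∈ π := by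
    intro p hp
    rw [List.getD_eq_getElem _ _ hp]
    exact List.getElem_mem _
  have hidx : ∀ p, p < n → π.idxOf (π.getD p 0) = p := by
    intro p hp
    rw [List.getD_eq_getElem _ _ hp]
    exact hnd.idxOf_getElem p hp
  have hidxlt : ∀ c ∈ π, π.idxOf c < n := fun c hc => List.idxOf_lt_length_iff.mpr hc
  have hgetidx : ∀ c ∈ π, π.getD (π.idxOf c) 0 = c := by
    intro c hc
    rw [List.getD_eq_getElem _ _ (hidxlt c hc)]
    exact List.getElem_idxOf (hidxlt c hc)
  -- membership in fword
  have hmemf : ∀ x, x ∈ fword π ↔ ∃ j, j < n ∧ dval π (j+1) = x := by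
    intro x
    simp [fword, ← hn]
  rcases Nat.eq_zero_or_pos n with h0 | hpos
  · have hπnil : π = [] := List.length_eq_zero_iff.mp h0
    subst hπnil
    refine ⟨?_, ?_, ?_⟩ <;> simp [fword, maxLetter]
  -- max letter computation
  have hmax : maxLetter (fword π) = 1 + Dfun π (n-1) := by
    apply le_antisymm
    · apply maxLetter_le
      intro x hx
      obtain ⟨j, hj, rfl⟩ := (hmemf x).mp hx
      rw [dval_eq_Dfun]
      have hjm : (j:ℕ)+1 ∈ π := (hmem (j+1)).mpr ⟨by omega, by omega⟩
      have := hidxlt _ hjm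
      have := Dfun_mono π (show π.idxOf (j+1) ≤ n - 1 by omega)
      omega
    · have hv : π.getD (n-1) 0 ∈ π := hgetmem _ (by omega)
      have hv1 := (hmem _).mp hv
      apply le_maxLetter
      refine (hmemf _).mpr ⟨π.getD (n-1) 0 - 1, by omega, ?_⟩
      have he : π.getD (n-1) 0 - 1 + 1 = π.getD (n-1) 0 := by omega
      rw [he, dval_eq_Dfun, hidx _ (by omega)]
  refine ⟨?_, ?_, ?_⟩
  · intro x hx
    obtain ⟨j, hj, rfl⟩ := (hmemf x).mp hx
    rw [dval_eq_Dfun]; omega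
  · intro i hi
    rw [hmax] at hi
    obtain ⟨p, hp, hpe⟩ := Dfun_surj π (n-1) i (by omega)
    have hplt : p < n := by omega
    have hc : π.getD p 0 ∈ π := hgetmem p hplt
    have hc1 := (hmem _).mp hc
    refine (hmemf _).mpr ⟨π.getD p 0 - 1, by omega, ?_⟩
    have he : π.getD p 0 - 1 + 1 = π.getD p 0 := by omega
    rw [he, dval_eq_Dfun, hidx p hplt, hpe]
    omega
  · intro i hi
    rw [hmax] at hi
    have hi1 : i + 1 ≤ Dfun π (n-1) := by omega
    -- existence of a position in fword with letter i+1
    obtain ⟨p₀, hp₀, hp₀e⟩ := Dfun_surj π (n-1) i (by omega)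
    have hp₀lt : p₀ < n := by omega
    have hc₀ : π.getD p₀ 0 ∈ π := hgetmem p₀ hp₀lt
    have hc₀1 := (hmem _).mp hc₀
    set s₀ := π.getD p₀ 0 - 1 with hs₀
    have hs₀P : (fword π).getD s₀ 0 = i + 1 := by
      rw [fword_getD π (show s₀ < n by omega)]
      have he : s₀ + 1 = π.getD p₀ 0 := by omega
      rw [he, dval_eq_Dfun, hidx p₀ hp₀lt, hp₀e]
      omega
    set P := fun s => (fword π).getD s 0 = i + 1 with hP
    set t := Nat.findGreatest P (n-1) with htdef
    have ht : P t := Nat.findGreatest_spec (show s₀ ≤ n - 1 by omega) hs₀P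
    have htlt : t < n := by
      have := Nat.findGreatest_le (P := P) (n-1)
      omega
    have hmaxt : ∀ s, s < n → t < s → (fword π).getD s 0 ≠ i + 1 := by
      intro s hs hts
      exact Nat.findGreatest_is_greatest (P := P) hts (by omega)
    -- p = position of value t+1
    have htm : t + 1 ∈ π := (hmem _).mpr ⟨by omega, by omega⟩
    set p := π.idxOf (t+1) with hpdef
    have hplt : p < n := hidxlt _ htm
    have hgp : π.getD p 0 = t + 1 := hgetidx _ htm
    have hDp : Dfun π p = i := by
      have h3 : (fword π).getD t 0 = i + 1 := ht
      rw [fword_getD π htlt, dval_eq_Dfun, ← hpdef] at h3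
      omega
    have hpne : p ≠ n - 1 := by
      intro h
      rw [h] at hDp
      omega
    have hp1lt : p + 1 < n := by omega
    have hc' : π.getD (p+1) 0 ∈ π := hgetmem _ hp1lt
    have hc'1 := (hmem _).mp hc'
    have hidx' : π.idxOf (π.getD (p+1) 0) = p + 1 := hidx _ hp1lt
    have hdesc : π.getD (p+1) 0 < t + 1 := by
      by_contra hnd'
      push_neg at hnd'
      have hne : π.getD (p+1) 0 ≠ t + 1 := by
        intro h
        rw [h] at hidx'
        omega
      have hgt : t + 1 < π.getD (p+1) 0 := by omega
      have h2 := Dfun_succ π p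
      rw [hgp, if_neg (by omega)] at h2
      have hDp1 : Dfun π (p+1) = i := by omega
      apply hmaxt (π.getD (p+1) 0 - 1) (by omega) (by omega)
      rw [fword_getD π (by omega : π.getD (p+1) 0 - 1 < n)]
      have he : π.getD (p+1) 0 - 1 + 1 = π.getD (p+1) 0 := by omega
      rw [he, dval_eq_Dfun, hidx', hDp1]
      omega
    have hDp1 : Dfun π (p+1) = i + 1 := by
      have h2 := Dfun_succ π p
      rw [hgp, if_pos hdesc] at h2
      omega
    have htP : (fword π).getD t 0 = i + 1 := ht
    refine ⟨t, by rw [fword_length]; exact htlt, htP, ?_, ?_⟩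
    · intro s hs hts
      exact hmaxt s (by rw [fword_length] at hs; exact hs) hts
    · refine ⟨π.getD (p+1) 0 - 1, by omega, ?_⟩
      rw [fword_getD π (by omega : π.getD (p+1) 0 - 1 < n)]
      have he : π.getD (p+1) 0 - 1 + 1 = π.getD (p+1) 0 := by omega
      rw [he, dval_eq_Dfun, hidx', hDp1]
      omega
end

section
/- Let w be a word on positive integers with max(w) = k+1 such that every letter in {1,...,k+1} occurs in w and the rightmost occurrence of each i ≤ k is preceded by an occurrence of i+1. Then the permutation g(w), formed by concatenating the increasing lists of positions p_w(1), p_w(2), ..., p_w(k+1), has exactly k descents. -/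
lemma des_cons2 (a b : ℕ) (t : List ℕ) :
    des (a :: b :: t) = (if b < a then 1 else 0) + des (b :: t) := by
  unfold des
  simp only [List.length_cons, Nat.add_sub_cancel, List.range_succ_eq_map,
    List.filter_cons, List.filter_map, List.length_cons, List.getD_cons_succ,
    List.getD_cons_zero, List.length_map, Function.comp_def]
  by_cases h : b < a <;> simp [h, Nat.add_comm]

lemma des_single (a : ℕ) : des [a] = 0 := by simp [des]

lemma des_append (a b : List ℕ) (ha : a ≠ []) (hb : b ≠ []) :
    des (a ++ b) = des a + des b +
      (if b.getD 0 0 < a.getD (a.length - 1) 0 then 1 else 0) := by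
  induction a with
  | nil => simp at ha
  | cons x t ih =>
    cases t with
    | nil =>
      obtain ⟨c, s, rfl⟩ := List.exists_cons_of_ne_nil hb
      simp [des_cons2, des_single, Nat.add_comm]
    | cons y s =>
      have := ih (by simp)
      simp only [List.cons_append] at *
      rw [des_cons2, this, des_cons2]
      have hh : ((y :: s) ++ b).getD 0 0 = y := by simp
      simp only [List.cons_append] at hh
      have hl : (x :: y :: s).getD ((x :: y :: s).length - 1) 0
          = (y :: s).getD ((y :: s).length - 1) 0 := by simp
      rw [hl]; omega

lemma des_sorted (l : List ℕ) (h : l.Chain' (· < ·)) : des l = 0 := by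
  induction l with
  | nil => simp [des]
  | cons x t ih =>
    cases t with
    | nil => simp [des]
    | cons y s =>
      rw [des_cons2]
      have h1 : x < y := (List.isChain_cons_cons.mp h).1
      have := ih (List.isChain_cons_cons.mp h).2
      simp [Nat.not_lt.mpr (Nat.le_of_lt h1), this]

lemma des_flatten (B : List (List ℕ)) (hne : B ≠ [])
    (h0 : ∀ l ∈ B, l ≠ [] ∧ l.Chain' (· < ·))
    (hj : B.Chain' (fun a b => b.getD 0 0 < a.getD (a.length - 1) 0)) :
    des B.flatten = B.length - 1 := by
  induction B with
  | nil => simp at hne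
  | cons a t ih =>
    cases t with
    | nil => simpa using des_sorted a (h0 a (by simp)).2
    | cons b s =>
      have hbne : (b :: s).flatten ≠ [] := by
        have := (h0 b (by simp)).1
        cases hb : b with
        | nil => exact absurd hb this
        | cons c u => simp [hb]
      have hane := (h0 a (by simp)).1
      rw [List.flatten_cons, des_append a _ hane hbne,
        ih (by simp) (fun l hl => h0 l (by simp [hl])) (List.isChain_cons_cons.mp hj).2,
        des_sorted a (h0 a (by simp)).2]
      have hhead : (b :: s).flatten.getD 0 0 = b.getD 0 0 := by
        obtain ⟨c, u, rfl⟩ := List.exists_cons_of_ne_nil (h0 b (by simp)).1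
        simp
      rw [hhead, if_pos (List.isChain_cons_cons.mp hj).1]
      simp

lemma posList_pairwise (w : List ℕ) (j : ℕ) : (posList w j).Pairwise (· < ·) := by
  unfold posList
  rw [List.pairwise_map]
  exact (List.pairwise_lt_range (n := _)).filter _ |>.imp (by omega)

lemma mem_posList (w : List ℕ) (j x : ℕ) :
    x ∈ posList w j ↔ ∃ i, i < w.length ∧ w.getD i 0 = j ∧ x = i + 1 := by
  unfold posList
  simp [List.mem_filter, List.mem_range, eq_comm]
  aesop

lemma headD_le_mem (l : List ℕ) (h : l.Pairwise (· < ·)) (x : ℕ) (hx : x ∈ l) :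
    l.getD 0 0 ≤ x := by
  cases l with
  | nil => simp at hx
  | cons a t =>
    rcases List.mem_cons.mp hx with rfl | hxt
    · simp
    · simpa using Nat.le_of_lt ((List.pairwise_cons.mp h).1 x hxt)

lemma mem_le_lastD (l : List ℕ) (h : l.Pairwise (· < ·)) (x : ℕ) (hx : x ∈ l) :
    x ≤ l.getD (l.length - 1) 0 := by
  induction l with
  | nil => simp at hx
  | cons a t ih =>
    cases t with
    | nil => simp_all
    | cons b s =>
      have hl : (a :: b :: s).getD ((a :: b :: s).length - 1) 0
          = (b :: s).getD ((b :: s).length - 1) 0 := by simp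
      rw [hl]
      rcases List.mem_cons.mp hx with rfl | hxt
      · have hmem : (b :: s).getD ((b :: s).length - 1) 0 ∈ (b :: s) := by
          rw [List.getD_eq_getElem _ _ (by simp)]
          exact List.getElem_mem _
        exact Nat.le_of_lt ((List.pairwise_cons.mp h).1 _ hmem)
      · exact ih (List.pairwise_cons.mp h).2 hxt


/-- if `w ∈ 𝒜̂` with `max w = k + 1`, then `g(w)` has exactly `k` descents. -/
theorem des_gperm (w : List ℕ) (k : ℕ) (hw : InAhat w) (hm : maxLetter w = k + 1) :
    des (gperm w) = k := by
  obtain ⟨_, hocc, hright⟩ := hw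
  have hne : ∀ j, j < k + 1 → posList w (j+1) ≠ [] := by
    intro j hj
    have : j + 1 ∈ w := hocc j (by omega)
    obtain ⟨i, hi, hgi⟩ := List.mem_iff_getElem.mp this
    have : i + 1 ∈ posList w (j+1) := (mem_posList w (j+1) (i+1)).mpr
      ⟨i, hi, by rw [List.getD_eq_getElem _ _ hi]; exact hgi, rfl⟩
    exact List.ne_nil_of_mem this
  have hB : gperm w = ((List.range (k+1)).map (fun j => posList w (j+1))).flatten := by
    rw [gperm, hm, List.flatMap_def]
  rw [hB, des_flatten]
  · simp
  · simp
  · intro l hl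
    obtain ⟨j, hj, rfl⟩ := List.mem_map.mp hl
    exact ⟨hne j (List.mem_range.mp hj), (posList_pairwise w (j+1)).isChain⟩
  · unfold List.Chain'; rw [List.isChain_map, List.isChain_range_succ]
    intro j hj
    simp only [Nat.succ_eq_add_one]
    obtain ⟨t, ht, hgt, hrt, u, hut, hgu⟩ := hright j (by omega)
    have h1 : (posList w (j+1+1)).getD 0 0 ≤ u + 1 :=
      headD_le_mem _ (posList_pairwise w _) _ ((mem_posList w _ _).mpr
        ⟨u, by omega, hgu, rfl⟩)
    have h2 : t + 1 ≤ (posList w (j+1)).getD ((posList w (j+1)).length - 1) 0 :=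
      mem_le_lastD _ (posList_pairwise w _) _ ((mem_posList w _ _).mpr
        ⟨t, ht, hgt, rfl⟩)
    omega
end

section
/- For every word w in the poset 𝒜̂ (words on positive integers in which every letter in {1,...,max(w)} occurs and the rightmost occurrence of each i < max(w) is preceded by an occurrence of i+1), we have f(g(w)) = w. -/
namespace FGaux

def D (l : List ℕ) (k : ℕ) : ℕ :=
  ((List.range k).filter (fun i => decide (l.getD (i+1) 0 < l.getD i 0))).length

lemma dval_eq (l : List ℕ) (c : ℕ) : dval l c = 1 + D l (l.idxOf c) := rfl

lemma D_eq_zero_of_sorted (l : List ℕ) (hl : l.Pairwise (· < ·)) (k : ℕ) (hk : k < l.length) :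
    D l k = 0 := by
  unfold D
  rw [List.length_eq_zero_iff, List.filter_eq_nil_iff]
  intro i hi
  simp only [List.mem_range] at hi
  have h1 : i < l.length := by omega
  have h2 : i + 1 < l.length := by omega
  have := (List.pairwise_iff_getElem.mp hl) i (i+1) h1 h2 (by omega)
  simp only [List.getD_eq_getElem _ _ h1, List.getD_eq_getElem _ _ h2, decide_eq_true_eq]
  omega

lemma D_prefix (a b : List ℕ) (k : ℕ) (hk : k < a.length) : D (a ++ b) k = D a k := by
  unfold D
  congr 1
  apply List.filter_congr
  intro i hi
  simp only [List.mem_range] at hi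
  rw [List.getD_append _ _ _ _ (by omega), List.getD_append _ _ _ _ (by omega)]

lemma D_shift (a b : List ℕ) (k : ℕ) :
    D (a ++ b) (a.length + k) = D (a ++ b) a.length + D b k := by
  unfold D
  rw [List.range_add, List.filter_append, List.length_append]
  congr 1
  rw [List.filter_map, List.length_map]
  congr 1
  apply List.filter_congr
  intro i _
  simp only [Function.comp_apply]
  rw [List.getD_append_right _ _ _ _ (by omega), List.getD_append_right _ _ _ _ (by omega)]
  have e1 : a.length + i - a.length = i := by omega
  have e2 : a.length + i + 1 - a.length = i + 1 := by omega
  rw [e1, e2]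

lemma D_boundary (a b : List ℕ) (ha : a ≠ []) (hs : a.Pairwise (· < ·))
    (hb : b.getD 0 0 < a.getD (a.length - 1) 0) : D (a ++ b) a.length = 1 := by
  obtain ⟨m, hm⟩ : ∃ m, a.length = m + 1 := by
    cases a with
    | nil => exact absurd rfl ha
    | cons x t => exact ⟨t.length, rfl⟩
  unfold D
  rw [hm, List.range_succ, List.filter_append, List.length_append]
  have h1 : (List.filter (fun i => decide ((a ++ b).getD (i+1) 0 < (a ++ b).getD i 0))
      (List.range m)).length = 0 := by
    have := D_prefix a b m (by omega)
    have h0 := D_eq_zero_of_sorted a hs m (by omega)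
    unfold D at this h0
    omega
  rw [h1]
  have hgm : (a ++ b).getD m 0 = a.getD m 0 := List.getD_append _ _ _ _ (by omega)
  have hgm1 : (a ++ b).getD (m + 1) 0 = b.getD 0 0 := by
    rw [List.getD_append_right _ _ _ _ (by omega)]
    congr 1; omega
  have hlt : (a ++ b).getD (m+1) 0 < (a ++ b).getD m 0 := by
    rw [hgm, hgm1]
    have h2 : a.length - 1 = m := by omega
    rw [← h2]; exact hb
  rw [List.filter_singleton]
  have hd : decide ((a ++ b).getD (m+1) 0 < (a ++ b).getD m 0) = true := decide_eq_true hlt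
  rw [hd]
  simp

lemma main (L : List (List ℕ)) (hL : ∀ l ∈ L, l ≠ [] ∧ l.Pairwise (· < ·))
    (hC : L.Chain' (fun x y => y.getD 0 0 < x.getD (x.length - 1) 0)) :
    ∀ j, j < L.length → ∀ c, c ∈ L.getD j [] → (∀ j', j' < j → c ∉ L.getD j' []) →
      dval L.flatten c = 1 + j := by
  induction L with
  | nil => intro j hj; simp at hj
  | cons a L' ih =>
    intro j hj c hc hne
    rw [List.flatten_cons]
    cases j with
    | zero =>
      simp only [List.getD_cons_zero] at hc
      rw [dval_eq, List.idxOf_append_of_mem hc]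
      have hidx : a.idxOf c < a.length := List.idxOf_lt_length_iff.mpr hc
      rw [D_prefix _ _ _ hidx, D_eq_zero_of_sorted a (hL a (by simp)).2 _ hidx]
    | succ j' =>
      simp only [List.getD_cons_succ] at hc
      have hca : c ∉ a := by
        have := hne 0 (by omega)
        simpa using this
      have hj' : j' < L'.length := by simpa using hj
      obtain ⟨l0, L'', rfl⟩ : ∃ l0 L'', L' = l0 :: L'' := by
        cases L' with
        | nil => simp at hj'
        | cons x t => exact ⟨x, t, rfl⟩
      have hl0 : l0 ≠ [] := (hL l0 (by simp)).1
      have hbhead : (l0 :: L'').flatten.getD 0 0 = l0.getD 0 0 := by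
        rw [List.flatten_cons]
        exact List.getD_append _ _ _ _ (by cases l0 <;> simp_all)
      have hrel : l0.getD 0 0 < a.getD (a.length - 1) 0 := (List.isChain_cons_cons.mp hC).1
      have hIH := ih (fun l hl => hL l (by simp [hl]))
        (List.isChain_cons_cons.mp hC).2 j' hj' c hc
        (fun k hk => hne (k+1) (by omega))
      rw [dval_eq] at hIH ⊢
      rw [List.idxOf_append_of_notMem hca]
      have hsh := D_shift a (l0 :: L'').flatten ((l0 :: L'').flatten.idxOf c)
      have hb1 : D (a ++ (l0 :: L'').flatten) a.length = 1 := by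
        apply D_boundary a _ (hL a (by simp)).1 (hL a (by simp)).2
        rw [hbhead]; exact hrel
      unfold D at hsh hb1 hIH ⊢
      omega

lemma mem_posList {w : List ℕ} {j p : ℕ} :
    p ∈ posList w j ↔ ∃ i, i < w.length ∧ w.getD i 0 = j ∧ p = i + 1 := by
  simp only [posList, List.mem_map, List.mem_filter, List.mem_range, decide_eq_true_eq]
  constructor
  · rintro ⟨i, ⟨hi, hw⟩, rfl⟩; exact ⟨i, hi, hw, rfl⟩
  · rintro ⟨i, hi, hw, rfl⟩; exact ⟨i, ⟨hi, hw⟩, rfl⟩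

lemma posList_sorted (w : List ℕ) (j : ℕ) : (posList w j).Pairwise (· < ·) := by
  unfold posList
  exact ((List.pairwise_lt_range (n := _)).filter _).map _ (fun a b h => by omega)

lemma sorted_getD_zero_le {l : List ℕ} (hl : l.Pairwise (· < ·)) {x : ℕ} (hx : x ∈ l) :
    l.getD 0 0 ≤ x := by
  cases l with
  | nil => simp at hx
  | cons h t =>
    rcases List.mem_cons.mp hx with rfl | hx
    · simp
    · simpa using le_of_lt ((List.pairwise_cons.mp hl).1 x hx)

lemma le_sorted_getD_last {l : List ℕ} (hl : l.Pairwise (· < ·)) {x : ℕ} (hx : x ∈ l) :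
    x ≤ l.getD (l.length - 1) 0 := by
  obtain ⟨i, hi, rfl⟩ := List.mem_iff_getElem.mp hx
  have hlast : l.length - 1 < l.length := by omega
  rw [List.getD_eq_getElem _ _ hlast]
  rcases eq_or_lt_of_le (by omega : i ≤ l.length - 1) with h | h
  · subst h; rfl
  · exact le_of_lt ((List.pairwise_iff_getElem.mp hl) i (l.length - 1) hi hlast h)

lemma mem_le_maxLetter {w : List ℕ} {x : ℕ} (hx : x ∈ w) : x ≤ maxLetter w := by
  induction w with
  | nil => simp at hx
  | cons h t ih =>
    rcases List.mem_cons.mp hx with rfl | hx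
    · simp [maxLetter]
    · simp only [maxLetter, List.foldr_cons]
      exact le_max_of_le_right (ih hx)

lemma getD_mem_of_lt {w : List ℕ} {i : ℕ} (hi : i < w.length) : w.getD i 0 ∈ w := by
  rw [List.getD_eq_getElem _ _ hi]
  exact List.getElem_mem hi

lemma length_gperm (w : List ℕ) (hw : InAhat w) : (gperm w).length = w.length := by
  rw [gperm, List.length_flatMap]
  have h1 : ∀ j : ℕ, (posList w (j+1)).length =
      ((Finset.range w.length).filter (fun i => w.getD i 0 = j + 1)).card := by
    intro j
    rw [posList, List.length_map]
    simp [Finset.range, Finset.filter, Multiset.range, Multiset.filter_coe]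
  have h2 : ((List.range (maxLetter w)).map ((fun l => l.length) ∘ fun j => posList w (j+1))).sum
      = ∑ j ∈ Finset.range (maxLetter w),
        ((Finset.range w.length).filter (fun i => w.getD i 0 = j + 1)).card := by
    have he : ((List.range (maxLetter w)).map ((fun l => l.length) ∘ fun j => posList w (j+1)))
        = (List.range (maxLetter w)).map
          (fun j => ((Finset.range w.length).filter (fun i => w.getD i 0 = j + 1)).card) := by
      apply List.map_congr_left
      intro j _
      exact h1 j
    rw [he]
    rfl
  rw [show (List.map (fun a => (posList w (a + 1)).length) (List.range (maxLetter w))).sum = _ from h2]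
  have key := Finset.card_eq_sum_card_fiberwise (f := fun i => w.getD i 0 - 1)
    (s := Finset.range w.length) (t := Finset.range (maxLetter w)) ?_
  · rw [Finset.card_range] at key
    calc ∑ j ∈ Finset.range (maxLetter w),
          ((Finset.range w.length).filter (fun i => w.getD i 0 = j + 1)).card
        = ∑ j ∈ Finset.range (maxLetter w),
          ((Finset.range w.length).filter (fun i => w.getD i 0 - 1 = j)).card := by
          apply Finset.sum_congr rfl
          intro j _
          congr 1
          apply Finset.filter_congr
          intro i hi
          simp only [Finset.mem_range] at hi
          have h1' : 1 ≤ w.getD i 0 := hw.1 _ (getD_mem_of_lt hi)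
          constructor <;> (intro h; omega)
      _ = w.length := key.symm
  · intro i hi
    simp only [Finset.mem_coe, Finset.mem_range] at hi ⊢
    have h1' : 1 ≤ w.getD i 0 := hw.1 _ (getD_mem_of_lt hi)
    have h2' : w.getD i 0 ≤ maxLetter w := mem_le_maxLetter (getD_mem_of_lt hi)
    omega

end FGaux
open FGaux

/-- for every `w ∈ 𝒜̂`, `f(g(w)) = w`. -/
theorem fword_gperm (w : List ℕ) (hw : InAhat w) : fword (gperm w) = w := by
  set L : List (List ℕ) := (List.range (maxLetter w)).map (fun j => posList w (j+1)) with hLdef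
  have hflat : gperm w = L.flatten := rfl
  have hLlen : L.length = maxLetter w := by simp [hLdef]
  have hgetD : ∀ j, j < maxLetter w → L.getD j [] = posList w (j+1) := by
    intro j hj
    rw [List.getD_eq_getElem _ _ (by omega : j < L.length)]
    simp [hLdef]
  have hblocks : ∀ l ∈ L, l ≠ [] ∧ l.Pairwise (· < ·) := by
    intro l hl
    simp only [hLdef, List.mem_map, List.mem_range] at hl
    obtain ⟨j, hj, rfl⟩ := hl
    refine ⟨?_, posList_sorted w (j+1)⟩
    have hmem := hw.2.1 j hj
    obtain ⟨i, hi, hwi⟩ := List.mem_iff_getElem.mp hmem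
    exact List.ne_nil_of_mem (mem_posList.mpr ⟨i, hi, by rw [List.getD_eq_getElem _ _ hi, hwi], rfl⟩)
  have hchain : L.Chain' (fun x y => y.getD 0 0 < x.getD (x.length - 1) 0) := by
    rw [hLdef, List.Chain', List.isChain_map]
    cases hmx : maxLetter w with
    | zero => simp
    | succ k =>
      rw [List.isChain_range_succ]
      intro i hi
      obtain ⟨t, ht, hwt, hright, u, hu, hwu⟩ := hw.2.2 i (by omega)
      have htmem : t + 1 ∈ posList w (i+1) := mem_posList.mpr ⟨t, ht, hwt, rfl⟩
      have humem : u + 1 ∈ posList w (i+1+1) := mem_posList.mpr ⟨u, by omega, hwu, rfl⟩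
      have h1 := sorted_getD_zero_le (posList_sorted w (i+1+1)) humem
      have h2 := le_sorted_getD_last (posList_sorted w (i+1)) htmem
      show (posList w (i+1+1)).getD 0 0 < (posList w (i+1)).getD ((posList w (i+1)).length - 1) 0
      omega
  have hlen : (gperm w).length = w.length := length_gperm w hw
  apply List.ext_getElem
  · simp [fword, hlen]
  · intro i hi1 hi2
    have hin : i < w.length := by simpa [fword, hlen] using hi1
    have hfi : (fword (gperm w))[i] = dval (gperm w) (i+1) := by
      simp [fword, hlen, hin]
    rw [hfi]
    have hwgd : w.getD i 0 = w[i] := List.getD_eq_getElem _ _ hi2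
    have hj1 : 1 ≤ w[i] := hw.1 _ (List.getElem_mem hi2)
    have hjm : w[i] ≤ maxLetter w := mem_le_maxLetter (List.getElem_mem hi2)
    have hcmem : i + 1 ∈ L.getD (w[i]-1) [] := by
      rw [hgetD (w[i]-1) (by omega)]
      exact mem_posList.mpr ⟨i, hin, by rw [hwgd]; omega, rfl⟩
    have hcne : ∀ j', j' < w[i] - 1 → i + 1 ∉ L.getD j' [] := by
      intro j' hj' hmem
      rw [hgetD j' (by omega)] at hmem
      obtain ⟨i', hi', hwi', hii⟩ := mem_posList.mp hmem
      have hii' : i' = i := by omega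
      subst hii'
      omega
    have hmain := main L hblocks hchain (w[i]-1) (by omega) (i+1) hcmem hcne
    rw [hflat, hmain]
    omega
end

section
/- If σ and π are permutations with the same number of descents and σ ≤ π in pattern containment order, then f(σ) ≤ f(π) in subword order. -/
section FwordAux

/-- descent count before position `m` -/
def Dc (l : List ℕ) (m : ℕ) : ℕ :=
  ((List.range m).filter (fun i => decide (l.getD (i+1) 0 < l.getD i 0))).length

lemma Dc_mono (l : List ℕ) {m m' : ℕ} (h : m ≤ m') : Dc l m ≤ Dc l m' :=
  List.Sublist.length_le (List.Sublist.filter _ (List.range_sublist.mpr h))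

lemma Dc_succ (l : List ℕ) (m : ℕ) :
    Dc l (m+1) = Dc l m + if l.getD (m+1) 0 < l.getD m 0 then 1 else 0 := by
  unfold Dc
  rw [List.range_succ, List.filter_append, List.length_append]
  congr 1
  by_cases h : l.getD (m+1) 0 < l.getD m 0
  · rw [if_pos h, List.filter_cons, if_pos (by simpa using h)]
    simp
  · rw [if_neg h, List.filter_cons, if_neg (by simpa using h)]
    simp

lemma exists_descent (l : List ℕ) : ∀ (d a : ℕ), l.getD (a+d+1) 0 < l.getD a 0 →
    ∃ i, a ≤ i ∧ i < a+d+1 ∧ l.getD (i+1) 0 < l.getD i 0 := by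
  intro d
  induction d with
  | zero => intro a h; exact ⟨a, le_refl a, by omega, h⟩
  | succ d ih =>
    intro a h
    have e : a + (d+1) + 1 = (a + d + 1) + 1 := by omega
    rw [e] at h
    by_cases h2 : l.getD (a+d+1+1) 0 < l.getD (a+d+1) 0
    · exact ⟨a+d+1, by omega, by omega, h2⟩
    · have h3 : l.getD (a+d+1) 0 < l.getD a 0 := by omega
      obtain ⟨i, h1, h4, h5⟩ := ih a h3
      exact ⟨i, h1, by omega, h5⟩

lemma Dc_lt (l : List ℕ) {a b : ℕ} (hab : a < b) (h : l.getD b 0 < l.getD a 0) :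
    Dc l a < Dc l b := by
  obtain ⟨d, rfl⟩ : ∃ d, b = a + d + 1 := ⟨b - a - 1, by omega⟩
  obtain ⟨i, h1, h2, h3⟩ := exists_descent l d a h
  have h4 : Dc l i + 1 = Dc l (i+1) := by rw [Dc_succ, if_pos h3]
  have h5 := Dc_mono l h1
  have h6 := Dc_mono l (show i + 1 ≤ a + d + 1 by omega)
  omega

lemma chain_ineq (A B : ℕ → ℕ) (k : ℕ)
    (hstep : ∀ t, t + 1 < k → A (t+1) + B t ≤ B (t+1) + A t) :
    ∀ j j', j ≤ j' → j' < k → A j' + B j ≤ B j' + A j := by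
  intro j j' hle hlt
  induction j', hle using Nat.le_induction with
  | base => omega
  | succ j' hjj' ih =>
    have h1 := hstep j' hlt
    have h2 := ih (by omega)
    omega

lemma sublist_range' : ∀ (L : List ℕ) (s n : ℕ), L.Pairwise (· < ·) →
    (∀ x ∈ L, s ≤ x ∧ x < s + n) → List.Sublist L (List.range' s n) := by
  intro L
  induction L with
  | nil => exact fun _ _ _ _ => List.nil_sublist _
  | cons a L ih =>
    intro s n hp hb
    obtain ⟨hsa, han⟩ := hb a List.mem_cons_self
    have hp2 := (List.pairwise_cons.mp hp)
    have hsplit : List.range' s n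
        = List.range' s (a - s) ++ a :: List.range' (a+1) (n - (a-s) - 1) := by
      have h1 : List.range' s (a-s) ++ List.range' (s + (a-s)) (n - (a-s)) = List.range' s n := by
        rw [List.range'_append_1]; congr 1; omega
      rw [← h1]
      congr 1
      have e1 : s + (a - s) = a := by omega
      have e2 : n - (a - s) = (n - (a-s) - 1) + 1 := by omega
      rw [e1, e2, List.range'_succ]
      simp
    rw [hsplit]
    have hLs : List.Sublist (a :: L) (a :: List.range' (a+1) (n - (a-s) - 1)) := by
      apply List.Sublist.cons₂
      apply ih _ _ hp2.2
      intro x hx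
      have := hp2.1 x hx
      have := (hb x (List.mem_cons_of_mem a hx)).2
      omega
    exact hLs.trans (List.sublist_append_right _ _)

lemma mem_permlist {l : List ℕ} (h : IsPermList l) {x : ℕ} :
    x ∈ l ↔ 1 ≤ x ∧ x ≤ l.length := by
  rw [h.mem_iff]
  simp only [List.mem_map, List.mem_range]
  constructor
  · rintro ⟨a, ha, rfl⟩; omega
  · rintro ⟨h1, h2⟩; exact ⟨x - 1, by omega, by omega⟩

lemma nodup_permlist {l : List ℕ} (h : IsPermList l) : l.Nodup :=
  (List.Perm.nodup_iff h).mpr (List.nodup_range.map (fun a b hab => by omega))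

end FwordAux

/-- if `σ ≤ π` in pattern order and they have the same number of descents,
then `f(σ) ≤ f(π)` in subword order. -/

theorem fword_sublist (σ π : List ℕ) (hσ : IsPermList σ) (hπ : IsPermList π)
    (hdes : des σ = des π) (h : occursIn σ π) :
    List.Sublist (fword σ) (fword π) := by
  obtain ⟨s, hsmem, hslen, hiso⟩ := h
  rw [List.mem_sublists] at hsmem
  rcases Nat.eq_zero_or_pos σ.length with hk0 | hkpos
  · rw [List.length_eq_zero_iff] at hk0
    simp [hk0, fword]
  have hkn : σ.length ≤ π.length := hslen ▸ hsmem.length_le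
  have npos : 0 < π.length := lt_of_lt_of_le hkpos hkn
  obtain ⟨is, hmap, hpair⟩ := List.sublist_eq_map_getElem hsmem
  have hislen : is.length = σ.length := by
    have := congrArg List.length hmap; simp at this; omega
  set G : ℕ → ℕ := fun j => ((is.getD j ⟨0, npos⟩) : Fin π.length).val with hGdef
  have hGlt : ∀ j, G j < π.length := fun j => (is.getD j ⟨0, npos⟩).isLt
  have hGidx : ∀ j, (hj : j < σ.length) → is.getD j ⟨0, npos⟩ = is[j]'(by omega) := by
    intro j hj; exact List.getD_eq_getElem _ _ (by omega)
  have hGs : ∀ j, j < σ.length → s.getD j 0 = π.getD (G j) 0 := by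
    intro j hj
    have hjs : j < s.length := by omega
    rw [List.getD_eq_getElem _ _ hjs, List.getD_eq_getElem _ _ (hGlt j)]
    rw [List.getElem_of_eq hmap hjs, List.getElem_map]
    simp only [hGdef, hGidx j hj, Fin.getElem_fin]
  have hGmono : ∀ j j', j < j' → j' < σ.length → G j < G j' := by
    intro j j' hjj hj'
    have hj : j < σ.length := by omega
    have hlt := List.pairwise_iff_getElem.mp hpair j j' (by omega) (by omega) hjj
    simp only [hGdef, hGidx j hj, hGidx j' hj']
    exact hlt
  have hstep : ∀ t, t + 1 < σ.length →
      Dc σ (t+1) + Dc π (G t) ≤ Dc π (G (t+1)) + Dc σ t := by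
    intro t ht
    rw [Dc_succ σ t]
    by_cases hd : σ.getD (t+1) 0 < σ.getD t 0
    · have h1 : s.getD (t+1) 0 < s.getD t 0 := (hiso (t+1) ht t (by omega)).mp hd
      rw [hGs (t+1) ht, hGs t (by omega)] at h1
      have h2 := Dc_lt π (hGmono t (t+1) (by omega) ht) h1
      rw [if_pos hd]
      omega
    · have h2 := Dc_mono π (le_of_lt (hGmono t (t+1) (by omega) ht))
      rw [if_neg hd]
      omega
  have chain := chain_ineq (Dc σ) (fun j => Dc π (G j)) σ.length hstep
  have hdes' : Dc σ (σ.length - 1) = Dc π (π.length - 1) := hdes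
  have hupper : Dc π (G (σ.length - 1)) ≤ Dc σ (σ.length - 1) := by
    have h1 : G (σ.length - 1) ≤ π.length - 1 := by have := hGlt (σ.length - 1); omega
    have h2 := Dc_mono π h1
    omega
  have hDeq : ∀ j, j < σ.length → Dc π (G j) = Dc σ j := by
    intro j hj
    have hA := chain 0 j (Nat.zero_le j) hj
    have hB := chain j (σ.length - 1) (by omega) (by omega)
    have h0 : Dc σ 0 = 0 := rfl
    omega
  have hmemσ : ∀ c, c < σ.length → (c+1) ∈ σ :=
    fun c hc => (mem_permlist hσ).mpr ⟨by omega, by omega⟩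
  set J : ℕ → ℕ := fun c => σ.idxOf (c+1) with hJdef
  have hJlt : ∀ c, c < σ.length → J c < σ.length :=
    fun c hc => List.idxOf_lt_length_iff.mpr (hmemσ c hc)
  have hσJ : ∀ c, c < σ.length → σ.getD (J c) 0 = c + 1 := by
    intro c hc
    rw [List.getD_eq_getElem _ _ (hJlt c hc)]
    exact List.getElem_idxOf (hJlt c hc)
  set V : ℕ → ℕ := fun c => π.getD (G (J c)) 0 with hVdef
  have hVmem : ∀ c, c < σ.length → V c ∈ π := by
    intro c hc
    simp only [hVdef]
    rw [List.getD_eq_getElem _ _ (hGlt (J c))]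
    exact List.getElem_mem _
  have hVbound : ∀ c, c < σ.length → 1 ≤ V c ∧ V c ≤ π.length :=
    fun c hc => (mem_permlist hπ).mp (hVmem c hc)
  have hVs : ∀ c, c < σ.length → V c = s.getD (J c) 0 :=
    fun c hc => (hGs (J c) (hJlt c hc)).symm
  have hVmono : ∀ c c', c < c' → c' < σ.length → V c < V c' := by
    intro c c' hcc hc'
    have hc : c < σ.length := by omega
    rw [hVs c hc, hVs c' hc']
    apply (hiso (J c) (hJlt c hc) (J c') (hJlt c' hc')).mp
    rw [hσJ c hc, hσJ c' hc']
    omega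
  have hidxV : ∀ c, c < σ.length → π.idxOf (V c) = G (J c) := by
    intro c hc
    have hv : V c = π[G (J c)]'(hGlt (J c)) := List.getD_eq_getElem _ _ (hGlt (J c))
    rw [hv]
    exact (nodup_permlist hπ).idxOf_getElem _ (hGlt (J c))
  have hdval : ∀ c, c < σ.length → dval σ (c+1) = dval π (V c) := by
    intro c hc
    show 1 + Dc σ (σ.idxOf (c+1)) = 1 + Dc π (π.idxOf (V c))
    rw [hidxV c hc, hDeq (J c) (hJlt c hc)]
  set W : ℕ → ℕ := fun c => V c - 1 with hWdef
  have hL : List.Sublist ((List.range σ.length).map W) (List.range π.length) := by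
    rw [show List.range π.length = List.range' 0 π.length from List.range_eq_range']
    apply sublist_range'
    · rw [List.pairwise_map, List.pairwise_iff_getElem]
      intro i j hi hj hij
      simp only [List.length_range] at hi hj
      simp only [List.getElem_range, hWdef]
      have h1 := hVmono i j hij hj
      have h2 := (hVbound i (by omega)).1
      omega
    · intro x hx
      rw [List.mem_map] at hx
      obtain ⟨c, hc, rfl⟩ := hx
      rw [List.mem_range] at hc
      have h1 := hVbound c hc
      simp only [hWdef]
      omega
  have hfeq : fword σ = ((List.range σ.length).map W).map (fun c => dval π (c+1)) := by
    show (List.range σ.length).map (fun i => dval σ (i+1)) = _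
    rw [List.map_map]
    apply List.map_congr_left
    intro c hc
    rw [List.mem_range] at hc
    show dval σ (c+1) = dval π (W c + 1)
    have h2 := (hVbound c hc).1
    have h3 : W c + 1 = V c := by simp only [hWdef]; omega
    rw [h3]
    exact hdval c hc
  rw [hfeq]
  show List.Sublist _ ((List.range π.length).map (fun c => dval π (c+1)))
  exact List.Sublist.map _ hL
end

section
/- If v and w are words in 𝒜̂ with max(v) = max(w) and v ≤ w in subword order, then g(v) ≤ g(w) in permutation pattern containment order. -/
-- helper: flatMap sublist
lemma flatMap_sublist {l : List ℕ} {f g : ℕ → List ℕ}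
    (h : ∀ x ∈ l, (f x).Sublist (g x)) : (l.flatMap f).Sublist (l.flatMap g) := by
  induction l with
  | nil => simp
  | cons a t ih =>
    simp only [List.flatMap_cons]
    exact (h a (by simp)).append (ih fun x hx => h x (by simp [hx]))

lemma mem_gperm {v : List ℕ} {x : ℕ} (hx : x ∈ gperm v) :
    ∃ p, p < v.length ∧ x = p + 1 := by
  simp only [gperm, List.mem_flatMap, posList, List.mem_map, List.mem_filter,
    List.mem_range] at hx
  obtain ⟨j, -, p, ⟨hp, -⟩, rfl⟩ := hx
  exact ⟨p, hp, rfl⟩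

theorem gperm_occursIn' (v w : List ℕ)
    (hm : maxLetter v = maxLetter w) (h : List.Sublist v w) :
    occursIn (gperm v) (gperm w) := by
  obtain ⟨f, hf⟩ := List.sublist_iff_exists_orderEmbedding_getElem?_eq.mp h
  have key : ∀ i, i < v.length → f i < w.length ∧ w.getD (f i) 0 = v.getD i 0 := by
    intro i hi
    have := hf i
    rw [List.getElem?_eq_getElem hi, eq_comm, List.getElem?_eq_some_iff] at this
    obtain ⟨hlt, hv⟩ := this
    refine ⟨hlt, ?_⟩
    rw [List.getD_eq_getElem _ _ hlt, List.getD_eq_getElem _ _ hi, hv]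
  set F : ℕ → ℕ := fun p => f (p - 1) + 1 with hF
  -- each block maps to a sublist of the corresponding block
  have block : ∀ j, ((posList v j).map F).Sublist (posList w j) := by
    intro j
    have sorted_pos : ∀ (u : List ℕ), (posList u j).Pairwise (· < ·) := by
      intro u
      unfold posList
      rw [List.pairwise_map]
      exact (List.pairwise_filter.mpr
        (List.pairwise_lt_range.imp (fun {a b} hab => fun _ _ => by omega)))
    have sorted_img : ((posList v j).map F).Pairwise (· < ·) := by
      unfold posList
      rw [List.map_map, List.pairwise_map]
      refine List.pairwise_filter.mpr
        (List.pairwise_lt_range.imp (fun {a b} hab => fun _ _ => ?_))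
      simp only [Function.comp, hF, Nat.add_sub_cancel]
      exact Nat.succ_lt_succ (f.lt_iff_lt.mpr hab)
    have subset : ((posList v j).map F) ⊆ posList w j := by
      intro x hx
      simp only [List.mem_map, posList, List.mem_filter, List.mem_range] at hx ⊢
      obtain ⟨y, ⟨i, ⟨hi, hvi⟩, rfl⟩, rfl⟩ := hx
      obtain ⟨hfi, hwi⟩ := key i (by simpa using hi)
      refine ⟨f i, ⟨by simpa using hfi, ?_⟩, by simp [hF]⟩
      simp only [decide_eq_true_eq] at hvi ⊢
      rw [hwi]; exact hvi
    exact List.sublist_of_subperm_of_pairwise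
      ((sorted_img.nodup).subperm subset)
      (sorted_img.imp fun {a b} => Nat.le_of_lt)
      ((sorted_pos w).imp fun {a b} => Nat.le_of_lt)
  refine ⟨(gperm v).map F, List.mem_sublists.mpr ?_, ?_, ?_⟩
  · have : (gperm v).map F
        = (List.range (maxLetter v)).flatMap (fun j => (posList v (j+1)).map F) :=
      List.map_flatMap ..
    rw [this, gperm, ← hm]
    exact flatMap_sublist fun x _ => block (x+1)
  · simp
  · intro i hi j hj
    rw [List.getD_eq_getElem (gperm v) 0 hi, List.getD_eq_getElem (gperm v) 0 hj,
      List.getD_eq_getElem _ 0 (show i < ((gperm v).map F).length by simpa using hi),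
      List.getD_eq_getElem _ 0 (show j < ((gperm v).map F).length by simpa using hj),
      List.getElem_map, List.getElem_map]
    obtain ⟨p, hp, hpe⟩ := mem_gperm (List.getElem_mem hi)
    obtain ⟨q, hq, hqe⟩ := mem_gperm (List.getElem_mem hj)
    rw [hpe, hqe]
    simp only [hF, Nat.add_sub_cancel]
    constructor
    · intro hlt; exact Nat.succ_lt_succ (f.lt_iff_lt.mpr (by omega))
    · intro hlt; have := f.lt_iff_lt.mp (by omega : f p < f q); omega

/-- if `v, w ∈ 𝒜̂` with equal maximum letters and `v ≤ w` in subword order,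
then `g(v) ≤ g(w)` in pattern order. -/
theorem gperm_occursIn (v w : List ℕ) (hv : InAhat v) (hw : InAhat w)
    (hm : maxLetter v = maxLetter w) (h : List.Sublist v w) :
    occursIn (gperm v) (gperm w) := gperm_occursIn' v w hm h
end

section
/- If π is a permutation with exactly one descent, then μ(1, π) = −μ(21, π), where 1 is the permutation of length 1 and 21 the decreasing permutation of length 2. -/
namespace Aux

theorem ordIso_refl (a : List ℕ) : OrdIso a a := ⟨rfl, fun _ _ _ _ => Iff.rfl⟩

theorem occursIn_refl (a : List ℕ) : occursIn a a :=
  ⟨a, List.mem_sublists.2 (List.Sublist.refl a), ordIso_refl a⟩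

theorem occursIn_length {a b : List ℕ} (h : occursIn a b) : a.length ≤ b.length := by
  obtain ⟨s, hs, hi⟩ := h
  rw [hi.1]
  exact (List.mem_sublists.1 hs).length_le

theorem occursIn_trans {a b c : List ℕ} (hab : occursIn a b) (hbc : occursIn b c) :
    occursIn a c := by
  obtain ⟨s, hs, hbs⟩ := hbc
  obtain ⟨t, ht, hat⟩ := hab
  have hts : t.Sublist b := List.mem_sublists.1 ht
  have hsc : s.Sublist c := List.mem_sublists.1 hs
  obtain ⟨f, hf⟩ := List.sublist_iff_exists_fin_orderEmbedding_get_eq.1 hts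
  have hlen : b.length = s.length := hbs.1
  refine ⟨List.ofFn (fun ix : Fin t.length => s.get (Fin.cast hlen (f ix))), ?_, ?_⟩
  · apply List.mem_sublists.2
    refine List.Sublist.trans ?_ hsc
    apply List.sublist_iff_exists_fin_orderEmbedding_get_eq.2
    refine ⟨OrderEmbedding.ofStrictMono
      (fun ix : Fin (List.ofFn (fun ix : Fin t.length => s.get (Fin.cast hlen (f ix)))).length =>
        Fin.cast hlen (f (Fin.cast (by simp) ix)))
      (fun i j hij => by
        simp only [Fin.lt_iff_val_lt_val, Fin.coe_cast]
        exact f.lt_iff_lt.2 hij), fun ix => ?_⟩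
    simp only [List.get_eq_getElem, List.getElem_ofFn, OrderEmbedding.coe_ofStrictMono]
    congr 1
  · have hlat : a.length = t.length := hat.1
    refine ⟨by rw [List.length_ofFn, hlat], ?_⟩
    intro i hi j hj
    rw [hat.2 i hi j hj]
    have hit : i < t.length := hlat ▸ hi
    have hjt : j < t.length := hlat ▸ hj
    have hgett : ∀ (k : ℕ) (hk : k < t.length), t.getD k 0 = b.get (f ⟨k, hk⟩) := fun k hk => by
      rw [List.getD_eq_getElem _ _ hk]; exact hf ⟨k, hk⟩
    have hget' : ∀ (k : ℕ) (hk : k < t.length),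
        (List.ofFn (fun ix : Fin t.length => s.get (Fin.cast hlen (f ix)))).getD k 0
          = s.get (Fin.cast hlen (f ⟨k, hk⟩)) := fun k hk => by
      rw [List.getD_eq_getElem _ _ (by simpa using hk)]
      simp
    rw [hgett i hit, hgett j hjt, hget' i hit, hget' j hjt]
    have h5 := hbs.2 (f ⟨i, hit⟩) (f ⟨i, hit⟩).isLt (f ⟨j, hjt⟩) (f ⟨j, hjt⟩).isLt
    rw [List.getD_eq_getElem _ _ ((f ⟨i, hit⟩).isLt), List.getD_eq_getElem _ _ ((f ⟨j, hjt⟩).isLt),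
      List.getD_eq_getElem _ _ (by simpa [← hlen] using (f ⟨i, hit⟩).isLt),
      List.getD_eq_getElem _ _ (by simpa [← hlen] using (f ⟨j, hjt⟩).isLt)] at h5
    simpa using h5

end Aux
namespace Aux

theorem des_nil : des ([] : List ℕ) = 0 := rfl

theorem des_single (a : ℕ) : des [a] = 0 := rfl

theorem des_cons2 (a b : ℕ) (l : List ℕ) :
    des (a :: b :: l) = (if b < a then 1 else 0) + des (b :: l) := by
  simp only [des, List.length_cons, Nat.add_sub_cancel, List.range_succ_eq_map,
    List.filter_cons, List.filter_map, List.length_cons, List.getD_cons_succ,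
    List.getD_cons_zero, Function.comp_def, List.length_map]
  by_cases h : b < a <;> simp [h] <;> omega

theorem des_cons_le (a : ℕ) (l : List ℕ) : des l ≤ des (a :: l) := by
  cases l with
  | nil => simp [des_nil]
  | cons b t => rw [des_cons2]; omega

theorem des_middle (a b : ℕ) (l : List ℕ) : des (a :: l) ≤ des (a :: b :: l) := by
  cases l with
  | nil => simp [des_single, des_cons2]
  | cons c t =>
    rw [des_cons2, des_cons2, des_cons2]
    by_cases h1 : c < a <;> by_cases h2 : b < a <;> by_cases h3 : c < b <;> simp [h1, h2, h3] <;> omega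

theorem des_sublist_cons {s l : List ℕ} (h : s.Sublist l) :
    ∀ a, des (a :: s) ≤ des (a :: l) := by
  induction h with
  | slnil => intro a; exact le_refl _
  | cons b _ ih => intro a; exact (ih a).trans (des_middle a b _)
  | cons_cons b _ ih =>
    intro a
    rw [des_cons2, des_cons2]
    exact Nat.add_le_add_left (ih b) _

theorem des_sublist {s l : List ℕ} (h : s.Sublist l) : des s ≤ des l := by
  induction h with
  | slnil => exact le_refl _
  | cons b _ ih => exact ih.trans (des_cons_le b _)
  | cons_cons b h _ => exact des_sublist_cons h b

theorem des_ordIso {σ s : List ℕ} (h : OrdIso σ s) : des σ = des s := by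
  unfold des
  rw [← h.1]
  congr 1
  apply List.filter_congr
  intro i hi
  rw [List.mem_range] at hi
  have hi1 : i < σ.length := by omega
  have hi2 : i + 1 < σ.length := by omega
  exact decide_eq_decide.2 (h.2 (i+1) hi2 i hi1)

theorem occursIn_des_le {σ π : List ℕ} (h : occursIn σ π) : des σ ≤ des π := by
  obtain ⟨s, hs, hi⟩ := h
  rw [des_ordIso hi]
  exact des_sublist (List.mem_sublists.1 hs)

theorem pair_sublist {l : List ℕ} {i : ℕ} (h : i + 1 < l.length) :
    [l.getD i 0, l.getD (i+1) 0].Sublist l := by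
  rw [List.getD_eq_getElem _ _ (by omega), List.getD_eq_getElem _ _ h]
  have h1 : [l[i], l[i+1]].Sublist (List.drop i l) := by
    rw [← List.getElem_cons_drop (as := l) (i := i) (by omega), ← List.getElem_cons_drop (as := l) (i := i+1) h]
    exact List.Sublist.cons₂ _ (List.Sublist.cons₂ _ (List.nil_sublist _))
  exact h1.trans (List.drop_sublist i l)

theorem des_21 : des [2, 1] = 1 := rfl

theorem occursIn_21_iff {z : List ℕ} : occursIn [2, 1] z ↔ 1 ≤ des z := by
  constructor
  · intro h
    have := occursIn_des_le h
    rw [des_21] at this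
    exact this
  · intro h
    unfold des at h
    have hne : (List.range (z.length - 1)).filter
        (fun i => decide (z.getD (i+1) 0 < z.getD i 0)) ≠ [] := by
      intro he; rw [he] at h; simp at h
    obtain ⟨i, hi⟩ := List.exists_mem_of_ne_nil _ hne
    have hmem := List.mem_filter.1 hi
    have hir : i < z.length - 1 := List.mem_range.1 hmem.1
    have hdesc : z.getD (i+1) 0 < z.getD i 0 := of_decide_eq_true hmem.2
    have hlen : i + 1 < z.length := by omega
    set x := z.getD i 0 with hx
    set y := z.getD (i+1) 0 with hy
    refine ⟨[x, y], List.mem_sublists.2 (pair_sublist hlen), ?_⟩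
    refine ⟨rfl, ?_⟩
    intro p hp q hq
    simp only [List.length_cons, List.length_nil] at hp hq
    interval_cases p <;> interval_cases q <;>
      simp only [List.getD_cons_zero, List.getD_cons_succ] <;> omega

end Aux
namespace Aux

def idl (k : ℕ) : List ℕ := (List.range k).map (· + 1)

theorem idl_length (k : ℕ) : (idl k).length = k := by simp [idl]

theorem isPermList_idl (k : ℕ) : IsPermList (idl k) := by
  unfold IsPermList
  rw [idl_length]
  exact List.Perm.refl _

theorem idl_getD {k i : ℕ} (h : i < k) : (idl k).getD i 0 = i + 1 := by
  rw [List.getD_eq_getElem _ _ (by simp [idl_length, h])]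
  simp [idl]

theorem count_index (l : List ℕ) (p : ℕ → Bool) :
    ((List.range l.length).filter (fun j => p (l.getD j 0))).length = (l.filter p).length := by
  induction l with
  | nil => rfl
  | cons x t ih =>
    simp only [List.length_cons, List.range_succ_eq_map, List.filter_cons, List.filter_map,
      Function.comp_def, List.getD_cons_zero, List.getD_cons_succ, List.length_map]
    cases h : p x <;> simp [h, ← ih]

theorem range_filter_lt (t : ℕ) : ∀ n, ((List.range n).filter (fun x => decide (x < t))).length = min t n := by
  intro n
  induction n with
  | zero => simp
  | succ n ih =>
    rw [List.range_succ, List.filter_append, List.length_append, ih]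
    by_cases h : n < t <;> simp [h] <;> omega

theorem perm_count {l : List ℕ} (hl : IsPermList l) (p : ℕ → Bool) :
    (l.filter p).length = ((List.range l.length).filter (fun x => p (x + 1))).length := by
  rw [hl.filter p |>.length_eq, List.filter_map]
  simp [Function.comp_def]

theorem permList_getElem_eq_count {l : List ℕ} (hl : IsPermList l) (i : ℕ) (hi : i < l.length) :
    l[i] = ((List.range l.length).filter (fun j => decide (l.getD j 0 < l.getD i 0))).length + 1 := by
  set v := l.getD i 0 with hv
  have hvi : l[i] = v := by rw [hv, List.getD_eq_getElem _ _ hi]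
  have hvmem : v ∈ l := hvi ▸ List.getElem_mem hi
  have hvrange : 1 ≤ v ∧ v ≤ l.length := by
    have := hl.mem_iff.1 hvmem
    simp only [List.mem_map, List.mem_range] at this
    omega
  rw [count_index l (fun w => decide (w < v)), perm_count hl]
  have : ((List.range l.length).filter fun x => decide (x + 1 < v)) =
      ((List.range l.length).filter fun x => decide (x < v - 1)) := by
    apply List.filter_congr
    intro x _
    exact decide_eq_decide.2 (by omega)
  rw [this, range_filter_lt, hvi]
  omega

theorem ordIso_eq_of_perm {a b : List ℕ} (hab : OrdIso a b) (ha : IsPermList a)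
    (hb : IsPermList b) : a = b := by
  have hlen : a.length = b.length := hab.1
  apply List.ext_getElem hlen
  intro i hia hib
  rw [permList_getElem_eq_count ha i hia, permList_getElem_eq_count hb i hib]
  congr 1
  rw [← hlen]
  congr 1
  apply List.filter_congr
  intro j hj
  rw [List.mem_range] at hj
  exact decide_eq_decide.2 (hab.2 j hj i hia)

theorem des_idl (k : ℕ) : des (idl k) = 0 := by
  simp only [des, List.length_eq_zero_iff, List.filter_eq_nil_iff]
  intro i hi
  rw [List.mem_range, idl_length] at hi
  rw [idl_getD (by omega), idl_getD (by omega)]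
  simp

theorem eq_idl_of_des_zero {z : List ℕ} (hz : IsPermList z) (h : des z = 0) :
    z = idl z.length := by
  have hchain : List.IsChain (· ≤ ·) z := by
    rw [List.isChain_iff_getElem]
    intro i hi
    have : ¬ (z.getD (i+1) 0 < z.getD i 0) := by
      intro hlt
      have : (i : ℕ) ∈ (List.range (z.length - 1)).filter
          (fun i => decide (z.getD (i+1) 0 < z.getD i 0)) := by
        rw [List.mem_filter, List.mem_range]
        exact ⟨by omega, decide_eq_true hlt⟩
      rw [show (List.range (z.length - 1)).filter
          (fun i => decide (z.getD (i+1) 0 < z.getD i 0)) = [] from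
        List.length_eq_zero_iff.1 h] at this
      simp at this
    have h1 := List.getD_eq_getElem z 0 (show i < z.length by omega)
    have h2 := List.getD_eq_getElem z 0 (show i + 1 < z.length by omega)
    rw [h1, h2] at this
    simpa using Nat.le_of_not_lt this
  have hsorted : List.Pairwise (· ≤ ·) z := List.isChain_iff_pairwise.1 hchain
  have hsorted2 : List.Pairwise (· ≤ ·) (idl z.length) := by
    apply List.Pairwise.map
    · intro x y (hxy : x < y); omega
    · exact List.pairwise_lt_range
  exact List.Perm.eq_of_pairwise (fun _ _ _ _ h1 h2 => le_antisymm h1 h2) hsorted hsorted2 hz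

theorem idl_occursIn_idl {k m : ℕ} (h : k ≤ m) : occursIn (idl k) (idl m) :=
  ⟨idl k, List.mem_sublists.2 ((List.range_sublist.2 h).map _), ordIso_refl _⟩

theorem occursIn_one {z : List ℕ} (hz : z ≠ []) : occursIn [1] z := by
  cases z with
  | nil => exact absurd rfl hz
  | cons x t =>
    refine ⟨[x], List.mem_sublists.2 (List.singleton_sublist.2 (List.mem_cons_self (a := x) (l := t))), ?_⟩
    refine ⟨rfl, ?_⟩
    intro i hi j hj
    simp only [List.length_cons, List.length_nil] at hi hj
    interval_cases i <;> interval_cases j <;>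
      simp only [List.getD_cons_zero] <;> omega

end Aux
namespace Aux

theorem mem_permsUpTo {n : ℕ} {z : List ℕ} :
    z ∈ permsUpTo n ↔ IsPermList z ∧ z.length ≤ n := by
  unfold permsUpTo
  rw [List.mem_flatMap]
  constructor
  · rintro ⟨k, hk, hz⟩
    rw [List.mem_range] at hk
    rw [List.mem_permutations] at hz
    have hlen : z.length = k := by simpa using hz.length_eq
    refine ⟨?_, by omega⟩
    unfold IsPermList
    rw [hlen]
    exact hz
  · rintro ⟨h1, h2⟩
    exact ⟨z.length, List.mem_range.2 (by omega), List.mem_permutations.2 h1⟩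

theorem nodup_permsUpTo (n : ℕ) : (permsUpTo n).Nodup := by
  unfold permsUpTo
  rw [List.nodup_flatMap]
  constructor
  · intro k _
    exact List.nodup_permutations _
      (List.Nodup.map (fun x y h => by omega) List.nodup_range)
  · apply List.Pairwise.imp ?_ List.pairwise_lt_range
    intro k k' hkk' z hz hz'
    rw [List.mem_permutations] at hz hz'
    have h1 : z.length = k := by simpa using hz.length_eq
    have h2 : z.length = k' := by simpa using hz'.length_eq
    omega

theorem mem_intervalList {a b z : List ℕ} :
    z ∈ intervalList a b ↔
      IsPermList z ∧ z.length ≤ b.length ∧ occursIn a z ∧ occursIn z b := by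
  unfold intervalList
  rw [List.mem_filter, mem_permsUpTo, decide_eq_true_iff]
  tauto

theorem nodup_intervalList (a b : List ℕ) : (intervalList a b).Nodup :=
  (nodup_permsUpTo _).filter _

theorem sum_map_add' (l : List (List ℕ)) (f g : List ℕ → ℤ) :
    (l.map (fun z => f z + g z)).sum = (l.map f).sum + (l.map g).sum := by
  induction l with
  | nil => simp
  | cons a t ih => simp only [List.map_cons, List.sum_cons, ih]; ring

theorem interval_decomp {π : List ℕ} (hd : des π = 1) (m : ℕ)
    (hm : 2 ≤ m) (hidm : occursIn (idl m) π) (hmax : ∀ k, occursIn (idl k) π → k ≤ m) :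
    (intervalList [1] π).Perm (intervalList [2, 1] π ++ intervalList [1] (idl m)) := by
  have hmn : m ≤ π.length := by
    have := occursIn_length hidm
    rwa [idl_length] at this
  apply List.perm_of_nodup_nodup_toFinset_eq (nodup_intervalList _ _)
  · apply List.Nodup.append (nodup_intervalList _ _) (nodup_intervalList _ _)
    intro z hz1 hz2
    rw [mem_intervalList] at hz1 hz2
    have hdes1 : 1 ≤ des z := occursIn_21_iff.1 hz1.2.2.1
    have hdes0 : des z ≤ 0 := by
      have := occursIn_des_le hz2.2.2.2
      rwa [des_idl] at this
    omega
  · apply Finset.ext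
    intro z
    simp only [List.mem_toFinset, List.mem_append, mem_intervalList, idl_length]
    constructor
    · rintro ⟨hp, hlen, hone, hocc⟩
      by_cases h21 : 1 ≤ des z
      · exact Or.inl ⟨hp, hlen, occursIn_21_iff.2 h21, hocc⟩
      · have hz0 : des z = 0 := by omega
        have hzidl : z = idl z.length := eq_idl_of_des_zero hp hz0
        have hzm : z.length ≤ m := hmax z.length (hzidl ▸ hocc)
        exact Or.inr ⟨hp, hzm, hone, hzidl ▸ idl_occursIn_idl hzm⟩
    · rintro (⟨hp, hlen, h21, hocc⟩ | ⟨hp, hlen, h1, hocc⟩)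
      · refine ⟨hp, hlen, ?_, hocc⟩
        apply occursIn_one
        intro he
        have := occursIn_length h21
        rw [he] at this
        simp at this
      · exact ⟨hp, hlen.trans hmn, h1, occursIn_trans hocc hidm⟩

end Aux
namespace Aux

theorem idl_one : idl 1 = [1] := rfl
theorem idl_two : idl 2 = [1, 2] := rfl

theorem isPermList_one : IsPermList [1] := by
  show [1].Perm ((List.range 1).map (· + 1))
  exact List.Perm.refl _

theorem isPermList_21 : IsPermList [2, 1] := by
  show [2, 1].Perm ((List.range 2).map (· + 1))
  show [2, 1].Perm [1, 2]
  exact List.Perm.swap 1 2 []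

theorem occursIn_eq_of_length {z π : List ℕ} (h : occursIn z π) (hlen : z.length = π.length)
    (hz : IsPermList z) (hπ : IsPermList π) : z = π := by
  obtain ⟨s, hs, hi⟩ := h
  have hsub : s.Sublist π := List.mem_sublists.1 hs
  have hse : s = π := hsub.eq_of_length (by rw [← hi.1, hlen])
  exact ordIso_eq_of_perm (hse ▸ hi) hz hπ

theorem interval_one_21 : (intervalList [1] [2, 1]).Perm [[1], [2, 1]] := by
  apply List.perm_of_nodup_nodup_toFinset_eq (nodup_intervalList _ _) (by decide)
  apply Finset.ext
  intro z
  simp only [List.mem_toFinset, mem_intervalList]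
  constructor
  · rintro ⟨hp, hlen, h1, hocc⟩
    have hne : z ≠ [] := by
      intro he
      have := occursIn_length h1
      rw [he] at this
      simp at this
    have hlen1 : 1 ≤ z.length := by
      cases z with
      | nil => exact absurd rfl hne
      | cons a t => simp
    simp only [List.length_cons, List.length_nil] at hlen
    interval_cases hzl : z.length
    · -- length 1
      have : z = idl 1 := by
        have := eq_idl_of_des_zero hp (by
          have : z.length - 1 = 0 := by omega
          simp [des, this])
        rwa [hzl] at this
      rw [this, idl_one]
      simp
    · -- length 2
      have : z = [2, 1] := occursIn_eq_of_length hocc (by rw [hzl]; rfl) hp isPermList_21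
      simp [this]
  · intro hz
    simp only [List.mem_cons, List.not_mem_nil, or_false] at hz
    rcases hz with rfl | rfl
    · exact ⟨isPermList_one, by simp, occursIn_refl _, occursIn_one (by simp)⟩
    · exact ⟨isPermList_21, le_refl _, occursIn_one (by simp), occursIn_refl _⟩

end Aux
/-- if `π` has exactly one descent, then `μ(1,π) = -μ(21,π)`. -/
theorem moebius_one_eq_neg_moebius_21 (μ : List ℕ → List ℕ → ℤ) (hμ : MoebiusOn μ)
    (π : List ℕ) (hπ : IsPermList π) (hd : des π = 1) :
    μ [1] π = -μ [2, 1] π := by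
  suffices H : ∀ n (π : List ℕ), π.length = n → IsPermList π → des π = 1 →
      μ [1] π = -μ [2, 1] π from H _ π rfl hπ hd
  clear hπ hd π
  intro n
  induction n using Nat.strong_induction_on with
  | _ n IH =>
  intro π hlen hπ hd
  have hπlen2 : 2 ≤ π.length := by
    by_contra h
    have h0 : π.length - 1 = 0 := by omega
    simp [Aux.des_nil, des, h0] at hd
  have hπnil : π ≠ [] := by intro he; rw [he] at hπlen2; simp at hπlen2
  by_cases hcase : π.length = 2
  · -- base case : π = [2,1]
    have hperm : π.Perm [1, 2] := by
      have := hπ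
      unfold IsPermList at this
      rwa [hcase] at this
    have hab : ∃ a b : ℕ, π = [a, b] := by
      cases π with
      | nil => simp at hcase
      | cons a t =>
        cases t with
        | nil => simp at hcase
        | cons b u =>
          cases u with
          | nil => exact ⟨a, b, rfl⟩
          | cons c v => simp at hcase
    obtain ⟨a, b, rfl⟩ := hab
    have hamem : a ∈ [1, 2] := hperm.subset (by simp)
    have hbmem : b ∈ [1, 2] := hperm.subset (by simp)
    simp only [List.mem_cons, List.not_mem_nil, or_false] at hamem hbmem
    have hba : b < a := by
      rw [Aux.des_cons2, Aux.des_single] at hd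
      by_contra h
      simp [h] at hd
    have ha2 : a = 2 ∧ b = 1 := by omega
    obtain ⟨rfl, rfl⟩ := ha2
    -- now compute
    have hsum := hμ.2 [1] [2, 1] Aux.isPermList_one Aux.isPermList_21
      (Aux.occursIn_one (by simp)) (by simp)
    rw [(Aux.interval_one_21.map (μ [1])).sum_eq] at hsum
    simp only [List.map_cons, List.map_nil, List.sum_cons, List.sum_nil] at hsum
    have h11 : μ [1] [1] = 1 := hμ.1 [1]
    have h2121 : μ [2, 1] [2, 1] = 1 := hμ.1 [2, 1]
    rw [h11] at hsum
    omega
  · -- general case : π.length ≥ 3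
    have hπlen3 : 3 ≤ π.length := by omega
    have hnd : π.Nodup := by
      apply (hπ.nodup_iff).2
      exact List.Nodup.map (fun x y h => by omega) List.nodup_range
    -- an ascent exists
    have hasc : ∃ i, i + 1 < π.length ∧ π.getD i 0 < π.getD (i+1) 0 := by
      by_contra h
      push_neg at h
      have hall : ∀ x ∈ List.range (π.length - 1),
          (fun i => decide (π.getD (i+1) 0 < π.getD i 0)) x = true := by
        intro i hi
        rw [List.mem_range] at hi
        have h1 := h i (by omega)
        have hg1 := List.getD_eq_getElem π 0 (show i < π.length by omega)
        have hg2 := List.getD_eq_getElem π 0 (show i + 1 < π.length by omega)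
        have hne : π.getD i 0 ≠ π.getD (i+1) 0 := by
          rw [hg1, hg2]
          intro he
          have := (List.Nodup.getElem_inj_iff hnd).1 he
          omega
        exact decide_eq_true (by omega)
      have hdes : des π = π.length - 1 := by
        unfold des
        rw [List.filter_eq_self.2 hall, List.length_range]
      omega
    obtain ⟨i, hi1, hi2⟩ := hasc
    have hocc12 : occursIn (Aux.idl 2) π := by
      rw [Aux.idl_two]
      refine ⟨[π.getD i 0, π.getD (i+1) 0], List.mem_sublists.2 (Aux.pair_sublist hi1), ?_⟩
      refine ⟨rfl, ?_⟩
      intro p hp q hq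
      simp only [List.length_cons, List.length_nil] at hp hq
      interval_cases p <;> interval_cases q <;>
        simp only [List.getD_cons_zero, List.getD_cons_succ] <;> omega
    set m := Nat.findGreatest (fun k => occursIn (Aux.idl k) π) π.length with hmdef
    have hm2 : 2 ≤ m := Nat.le_findGreatest (by omega) hocc12
    have hidm : occursIn (Aux.idl m) π :=
      Nat.findGreatest_spec (P := fun k => occursIn (Aux.idl k) π) (by omega) hocc12
    have hmax : ∀ k, occursIn (Aux.idl k) π → k ≤ m := by
      intro k hk
      by_cases hkn : k ≤ π.length
      · exact Nat.le_findGreatest hkn hk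
      · exfalso
        have := Aux.occursIn_length hk
        rw [Aux.idl_length] at this
        omega
    have hidmnil : Aux.idl m ≠ [] := by
      intro he
      have := congrArg List.length he
      rw [Aux.idl_length] at this
      simp at this
      omega
    have hdecomp := Aux.interval_decomp hd m hm2 hidm hmax
    have hocc21π : occursIn [2, 1] π := Aux.occursIn_21_iff.2 (by omega)
    -- the three Möbius sum identities
    have hS1 := hμ.2 [1] π Aux.isPermList_one hπ (Aux.occursIn_one hπnil)
      (by intro he; rw [← he] at hπlen2; simp at hπlen2)
    have hS21 := hμ.2 [2, 1] π Aux.isPermList_21 hπ hocc21π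
      (by intro he; rw [← he] at hπlen3; simp at hπlen3)
    have hSid := hμ.2 [1] (Aux.idl m) Aux.isPermList_one (Aux.isPermList_idl m)
      (Aux.occursIn_one hidmnil)
      (by
        intro he
        have := congrArg List.length he
        rw [Aux.idl_length] at this
        simp at this
        omega)
    have e1 : ((intervalList [1] π).map (μ [1])).sum
        = ((intervalList [2, 1] π).map (μ [1])).sum
          + ((intervalList [1] (Aux.idl m)).map (μ [1])).sum := by
      rw [(hdecomp.map (μ [1])).sum_eq, List.map_append, List.sum_append]
    have e2 : ((intervalList [2, 1] π).map (μ [1])).sum = 0 := by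
      rw [hS1, hSid] at e1
      omega
    -- split off the π term
    have hππ : π ∈ intervalList [2, 1] π :=
      Aux.mem_intervalList.2 ⟨hπ, le_refl _, hocc21π, Aux.occursIn_refl π⟩
    obtain ⟨E, hper, hEmem⟩ :
        ∃ E : List (List ℕ), (intervalList [2, 1] π).Perm (π :: E) ∧
          ∀ z ∈ E, z ≠ π ∧ z ∈ intervalList [2, 1] π := by
      have hper := List.perm_cons_erase hππ
      have hndc := (hper.nodup_iff).1 (Aux.nodup_intervalList [2, 1] π)
      refine ⟨_, hper, fun z hz => ⟨?_, hper.symm.subset (List.mem_cons_of_mem _ hz)⟩⟩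
      intro he
      exact (List.nodup_cons.1 hndc).1 (he ▸ hz)
    have e3 : ((intervalList [2, 1] π).map (μ [1])).sum
        = μ [1] π + (E.map (μ [1])).sum := by
      rw [(hper.map (μ [1])).sum_eq]
      simp
    have e4 : ((intervalList [2, 1] π).map (μ [2, 1])).sum
        = μ [2, 1] π + (E.map (μ [2, 1])).sum := by
      rw [(hper.map (μ [2, 1])).sum_eq]
      simp
    -- inductive step on the strictly smaller elements
    have hz0 : ∀ z ∈ E, μ [1] z + μ [2, 1] z = 0 := by
      intro z hz
      obtain ⟨hzne, hzmem⟩ := hEmem z hz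
      rw [Aux.mem_intervalList] at hzmem
      obtain ⟨hzp, hzlen, hz21, hzocc⟩ := hzmem
      have hzlt : z.length < π.length := by
        rcases Nat.lt_or_ge z.length π.length with h | h
        · exact h
        · exfalso
          exact hzne (Aux.occursIn_eq_of_length hzocc (by omega) hzp hπ)
      have hdz : des z = 1 := by
        have hle : des z ≤ 1 := hd ▸ Aux.occursIn_des_le hzocc
        have hge : 1 ≤ des z := Aux.occursIn_21_iff.1 hz21
        omega
      have := IH z.length (by omega) z rfl hzp hdz
      omega
    have e5 : (E.map (fun z => μ [1] z + μ [2, 1] z)).sum = 0 :=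
      List.sum_eq_zero (by
        intro x hx
        rw [List.mem_map] at hx
        obtain ⟨z, hz, rfl⟩ := hx
        exact hz0 z hz)
    have e6 := Aux.sum_map_add' E (μ [1]) (μ [2, 1])
    rw [e5] at e6
    omega
end
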